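/- Let n ≥ 2 and m ∈ {1,…,n}, and set φ(k) = H_m(k)^{1/m} on the open positive cone Γ₊ ⊂ ℝ^n. Then for all h, k ∈ Γ₊ one has φ(k) ≤ Σ_{i=1}^n ∂φ/∂k_i(h)·k_i. -/

import Mathlib

/-- The normalized `m`-th elementary symmetric polynomial (the `m`-th mean curvature). -/
noncomputable def Hm (n m : ℕ) (k : Fin n → ℝ) : ℝ :=
  ((Nat.factorial m * Nat.factorial (n - m) : ℕ) : ℝ) / (Nat.factorial n : ℝ) *
    ∑ s ∈ Finset.powersetCard m Finset.univ, ∏ i ∈ s, k i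

/-- `φ = H_m^(1/m)`. -/
noncomputable def phi (n m : ℕ) (k : Fin n → ℝ) : ℝ := Hm n m k ^ ((1 : ℝ) / m)

namespace MLAux

noncomputable def E {n : ℕ} (m : ℕ) (s : Finset (Fin n)) (x : Fin n → ℝ) : ℝ :=
  ∑ t ∈ s.powersetCard m, ∏ i ∈ t, x i

variable {n : ℕ}

lemma E_zero (s : Finset (Fin n)) (x : Fin n → ℝ) : E 0 s x = 1 := by
  simp [E]


lemma E_pos {m : ℕ} {s : Finset (Fin n)} {x : Fin n → ℝ} (hm : m ≤ s.card)
    (hx : ∀ i ∈ s, 0 < x i) : 0 < E m s x := by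
  apply Finset.sum_pos
  · intro t ht
    rw [Finset.mem_powersetCard] at ht
    exact Finset.prod_pos fun i hi => hx i (ht.1 hi)
  · exact Finset.powersetCard_nonempty.2 hm


lemma E_erase {m : ℕ} {s : Finset (Fin n)} {i : Fin n} (hi : i ∈ s) (x : Fin n → ℝ) :
    E (m + 1) s x = E (m + 1) (s.erase i) x + x i * E m (s.erase i) x := by
  have h1 : s = insert i (s.erase i) := (Finset.insert_erase hi).symm
  have h2 : i ∉ s.erase i := Finset.notMem_erase _ _
  rw [E]
  conv_lhs => rw [h1]
  rw [Finset.powersetCard_succ_insert h2]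
  rw [Finset.sum_union]
  · congr 1
    rw [Finset.sum_image]
    · rw [E, Finset.mul_sum]
      apply Finset.sum_congr rfl
      intro t ht
      rw [Finset.mem_powersetCard] at ht
      rw [Finset.prod_insert (fun hit => h2 (ht.1 hit))]
    · intro a ha b hb hab
      rw [Finset.mem_coe, Finset.mem_powersetCard] at ha hb
      calc a = (insert i a).erase i := (Finset.erase_insert (fun h => h2 (ha.1 h))).symm
        _ = (insert i b).erase i := by rw [hab]
        _ = b := Finset.erase_insert (fun h => h2 (hb.1 h))
  · rw [Finset.disjoint_left]
    intro t ht ht'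
    rw [Finset.mem_powersetCard] at ht
    rw [Finset.mem_image] at ht'
    obtain ⟨u, _, rfl⟩ := ht'
    exact h2 (ht.1 (Finset.mem_insert_self i u))


lemma E_deriv {m : ℕ} {s : Finset (Fin n)} (x : Fin n → ℝ) :
    ∑ i ∈ s, x i * E m (s.erase i) x = (m + 1 : ℝ) * E (m + 1) s x := by
  have lhs : ∑ i ∈ s, x i * E m (s.erase i) x
      = ∑ p ∈ s.sigma (fun i => (s.erase i).powersetCard m), x p.1 * ∏ j ∈ p.2, x j := by
    rw [Finset.sum_sigma]
    simp [E, Finset.mul_sum]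
  have rhs : (m + 1 : ℝ) * E (m + 1) s x
      = ∑ p ∈ (s.powersetCard (m+1)).sigma (fun u => u), ∏ j ∈ p.1, x j := by
    rw [Finset.sum_sigma, E, Finset.mul_sum]
    apply Finset.sum_congr rfl
    intro u hu
    rw [Finset.mem_powersetCard] at hu
    simp only []
    rw [Finset.sum_const, hu.2]
    simp [nsmul_eq_mul]
  rw [lhs, rhs]
  apply Finset.sum_nbij' (i := fun p => ⟨insert p.1 p.2, p.1⟩)
    (j := fun q => ⟨q.2, q.1.erase q.2⟩)
  · intro p hp
    rw [Finset.mem_sigma] at hp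
    obtain ⟨h1, h2⟩ := hp
    rw [Finset.mem_powersetCard] at h2
    have hip : p.1 ∉ p.2 := fun hc => (Finset.notMem_erase p.1 s) (h2.1 hc)
    rw [Finset.mem_sigma, Finset.mem_powersetCard]
    refine ⟨⟨?_, ?_⟩, Finset.mem_insert_self _ _⟩
    · intro j hj
      rcases Finset.mem_insert.1 hj with rfl | hj
      · exact h1
      · exact Finset.mem_of_mem_erase (h2.1 hj)
    · rw [Finset.card_insert_of_notMem hip, h2.2]
  · intro q hq
    rw [Finset.mem_sigma] at hq
    obtain ⟨h1, h2⟩ := hq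
    rw [Finset.mem_powersetCard] at h1
    rw [Finset.mem_sigma, Finset.mem_powersetCard]
    refine ⟨h1.1 h2, ?_, ?_⟩
    · intro j hj
      exact Finset.mem_erase.2 ⟨(Finset.mem_erase.1 hj).1, h1.1 (Finset.mem_of_mem_erase hj)⟩
    · rw [Finset.card_erase_of_mem h2, h1.2]; rfl
  · intro p hp
    rw [Finset.mem_sigma] at hp
    obtain ⟨_, h2⟩ := hp
    rw [Finset.mem_powersetCard] at h2
    have hip : p.1 ∉ p.2 := fun hc => (Finset.notMem_erase p.1 s) (h2.1 hc)
    simp [Finset.erase_insert hip]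
  · intro q hq
    rw [Finset.mem_sigma] at hq
    simp [Finset.insert_erase hq.2]
  · intro p hp
    rw [Finset.mem_sigma] at hp
    obtain ⟨_, h2⟩ := hp
    rw [Finset.mem_powersetCard] at h2
    have hip : p.1 ∉ p.2 := fun hc => (Finset.notMem_erase p.1 s) (h2.1 hc)
    simp [Finset.prod_insert hip]


noncomputable def harm (a f : ℝ) : ℝ := a * f / (a + f)


lemma harm_pos {a f : ℝ} (ha : 0 < a) (hf : 0 < f) : 0 < harm a f := by
  unfold harm; positivity


lemma harm_mono {a f f' : ℝ} (ha : 0 < a) (hf : 0 < f) (h : f ≤ f') :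
    harm a f ≤ harm a f' := by
  have hf' : 0 < f' := lt_of_lt_of_le hf h
  unfold harm
  rw [div_le_div_iff₀ (by positivity) (by positivity)]
  nlinarith [mul_le_mul_of_nonneg_left h (mul_pos ha ha).le]


lemma milne {a1 a2 f1 f2 : ℝ} (ha1 : 0 < a1) (ha2 : 0 < a2) (hf1 : 0 < f1) (hf2 : 0 < f2) :
    harm a1 f1 + harm a2 f2 ≤ harm (a1 + a2) (f1 + f2) := by
  unfold harm
  rw [div_add_div _ _ (by positivity) (by positivity), div_le_div_iff₀ (by positivity) (by positivity)]
  nlinarith [sq_nonneg (a1 * f2 - a2 * f1), mul_pos ha1 hf2, mul_pos ha2 hf1,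
    mul_pos (mul_pos ha1 ha2) (mul_pos hf1 hf2)]


lemma E_one (s : Finset (Fin n)) (x : Fin n → ℝ) : E 1 s x = ∑ i ∈ s, x i := by
  have h := E_deriv (m := 0) (s := s) x
  simp only [E_zero, mul_one] at h
  norm_num at h
  rw [show (1:ℕ) = 0 + 1 from rfl, ← h]


lemma key (j : ℕ) (s : Finset (Fin n)) (x : Fin n → ℝ) (hc : j + 2 ≤ s.card)
    (hx : ∀ i ∈ s, 0 < x i) :
    ((j : ℝ) + 2) * (E (j+2) s x / E (j+1) s x)
      = ∑ i ∈ s, harm (x i) (E (j+1) (s.erase i) x / E j (s.erase i) x) := by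
  have hEs : 0 < E (j+1) s x := E_pos (by omega) hx
  have step : ∀ i ∈ s, harm (x i) (E (j+1) (s.erase i) x / E j (s.erase i) x)
      = x i * E (j+1) (s.erase i) x / E (j+1) s x := by
    intro i hi
    have hcard : j + 1 ≤ (s.erase i).card := by
      rw [Finset.card_erase_of_mem hi]; omega
    have hxe : ∀ a ∈ s.erase i, 0 < x a := fun a ha => hx a (Finset.mem_of_mem_erase ha)
    have hu : 0 < E (j+1) (s.erase i) x := E_pos hcard hxe
    have hv : 0 < E j (s.erase i) x := E_pos (by omega) hxe
    have hxi : 0 < x i := hx i hi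
    rw [E_erase hi x]
    unfold harm
    rw [div_eq_div_iff (by positivity)
      (by have := mul_pos hxi hv; positivity)]
    field_simp
    ring
  rw [Finset.sum_congr rfl step]
  have : ∑ i ∈ s, x i * E (j+1) (s.erase i) x / E (j+1) s x
      = (∑ i ∈ s, x i * E (j+1) (s.erase i) x) / E (j+1) s x := by
    rw [Finset.sum_div]
  rw [this, E_deriv x, mul_div_assoc]
  push_cast
  ring_nf


lemma r_superadd : ∀ (j : ℕ) (s : Finset (Fin n)) (x y : Fin n → ℝ),
    j + 1 ≤ s.card → (∀ i ∈ s, 0 < x i) → (∀ i ∈ s, 0 < y i) →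
    E (j+1) s x / E j s x + E (j+1) s y / E j s y
      ≤ E (j+1) s (x + y) / E j s (x + y) := by
  intro j
  induction j with
  | zero =>
    intro s x y hc hx hy
    simp only [E_zero, div_one]
    norm_num [E_one]
    rw [← Finset.sum_add_distrib]
  | succ j ih =>
    intro s x y hc hx hy
    have hxy : ∀ i ∈ s, 0 < x i + y i := fun i hi => add_pos (hx i hi) (hy i hi)
    have hxy' : ∀ i ∈ s, 0 < (x + y) i := hxy
    have hpos : (0:ℝ) < (j:ℝ) + 2 := by positivity
    rw [← mul_le_mul_iff_right₀ hpos, mul_add,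
      key j s x (by omega) hx, key j s y (by omega) hy, key j s (x+y) (by omega) hxy',
      ← Finset.sum_add_distrib]
    apply Finset.sum_le_sum
    intro i hi
    have hcard : j + 1 ≤ (s.erase i).card := by
      rw [Finset.card_erase_of_mem hi]; omega
    have hxe : ∀ a ∈ s.erase i, 0 < x a := fun a ha => hx a (Finset.mem_of_mem_erase ha)
    have hye : ∀ a ∈ s.erase i, 0 < y a := fun a ha => hy a (Finset.mem_of_mem_erase ha)
    have hxye : ∀ a ∈ s.erase i, 0 < (x + y) a :=
      fun a ha => add_pos (hxe a ha) (hye a ha)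
    have rx : 0 < E (j+1) (s.erase i) x / E j (s.erase i) x :=
      div_pos (E_pos hcard hxe) (E_pos (by omega) hxe)
    have ry : 0 < E (j+1) (s.erase i) y / E j (s.erase i) y :=
      div_pos (E_pos hcard hye) (E_pos (by omega) hye)
    calc harm (x i) (E (j+1) (s.erase i) x / E j (s.erase i) x)
          + harm (y i) (E (j+1) (s.erase i) y / E j (s.erase i) y)
        ≤ harm (x i + y i) (E (j+1) (s.erase i) x / E j (s.erase i) x
            + E (j+1) (s.erase i) y / E j (s.erase i) y) :=
          milne (hx i hi) (hy i hi) rx ry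
      _ ≤ harm ((x + y) i) (E (j+1) (s.erase i) (x+y) / E j (s.erase i) (x+y)) := by
          exact harm_mono (hxy i hi) (add_pos rx ry) (ih (s.erase i) x y hcard hxe hye)


lemma gm_superadd {ι : Type*} (s : Finset ι) (hs : s.Nonempty) (a b : ι → ℝ)
    (ha : ∀ i ∈ s, 0 < a i) (hb : ∀ i ∈ s, 0 < b i) :
    (∏ i ∈ s, a i) ^ ((1:ℝ) / s.card) + (∏ i ∈ s, b i) ^ ((1:ℝ) / s.card)
      ≤ (∏ i ∈ s, (a i + b i)) ^ ((1:ℝ) / s.card) := by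
  set w : ι → ℝ := fun _ => (1:ℝ) / s.card with hw
  have hcard : (0:ℝ) < s.card := by
    exact_mod_cast Finset.card_pos.2 hs
  have hwnn : ∀ i ∈ s, 0 ≤ w i := fun i _ => by positivity
  have hwsum : ∑ i ∈ s, w i = 1 := by
    rw [Finset.sum_const, nsmul_eq_mul]
    field_simp
  have hab : ∀ i ∈ s, 0 < a i + b i := fun i hi => add_pos (ha i hi) (hb i hi)
  have hP : 0 < ∏ i ∈ s, (a i + b i) := Finset.prod_pos hab
  have key : ∀ (c : ι → ℝ), (∀ i ∈ s, 0 < c i) → (∀ i ∈ s, c i ≤ a i + b i) →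
      (∏ i ∈ s, c i) ^ ((1:ℝ)/s.card) / (∏ i ∈ s, (a i + b i)) ^ ((1:ℝ)/s.card)
        ≤ ∑ i ∈ s, w i * (c i / (a i + b i)) := by
    intro c hc _
    have h1 : (∏ i ∈ s, c i) ^ ((1:ℝ)/s.card) / (∏ i ∈ s, (a i + b i)) ^ ((1:ℝ)/s.card)
        = ∏ i ∈ s, (c i / (a i + b i)) ^ w i := by
      rw [← Real.div_rpow (Finset.prod_nonneg (fun i hi => (hc i hi).le)) hP.le,
        ← Finset.prod_div_distrib]
      rw [← Real.finset_prod_rpow s _ (fun i hi => div_nonneg (hc i hi).le (hab i hi).le)]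
    rw [h1]
    exact Real.geom_mean_le_arith_mean_weighted s w _ hwnn hwsum
      (fun i hi => div_nonneg (hc i hi).le (hab i hi).le)
  have hA := key a ha (fun i hi => by linarith [hb i hi])
  have hB := key b hb (fun i hi => by linarith [ha i hi])
  have hsum : ∑ i ∈ s, w i * (a i / (a i + b i)) + ∑ i ∈ s, w i * (b i / (a i + b i)) = 1 := by
    rw [← Finset.sum_add_distrib, ← hwsum]
    apply Finset.sum_congr rfl
    intro i hi
    rw [← mul_add]
    rw [← add_div, div_self (hab i hi).ne']
    ring
  have hPp : 0 < (∏ i ∈ s, (a i + b i)) ^ ((1:ℝ)/s.card) := Real.rpow_pos_of_pos hP _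
  calc (∏ i ∈ s, a i) ^ ((1:ℝ)/s.card) + (∏ i ∈ s, b i) ^ ((1:ℝ)/s.card)
      = ((∏ i ∈ s, a i) ^ ((1:ℝ)/s.card) / (∏ i ∈ s, (a i + b i)) ^ ((1:ℝ)/s.card)
        + (∏ i ∈ s, b i) ^ ((1:ℝ)/s.card) / (∏ i ∈ s, (a i + b i)) ^ ((1:ℝ)/s.card))
        * (∏ i ∈ s, (a i + b i)) ^ ((1:ℝ)/s.card) := by
        field_simp
    _ ≤ 1 * (∏ i ∈ s, (a i + b i)) ^ ((1:ℝ)/s.card) := by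
        apply mul_le_mul_of_nonneg_right _ hPp.le
        exact le_trans (add_le_add hA hB) (le_of_eq hsum)
    _ = (∏ i ∈ s, (a i + b i)) ^ ((1:ℝ)/s.card) := one_mul _


lemma prod_r {m : ℕ} {s : Finset (Fin n)} {x : Fin n → ℝ} (hm : m ≤ s.card)
    (hx : ∀ i ∈ s, 0 < x i) :
    ∏ j ∈ Finset.range m, (E (j+1) s x / E j s x) = E m s x := by
  induction m with
  | zero => simp [E_zero]
  | succ m ih =>
    rw [Finset.prod_range_succ, ih (by omega), mul_comm,
      div_mul_cancel₀ _ (E_pos (by omega) hx).ne']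

lemma E_rpow_superadd {m : ℕ} {s : Finset (Fin n)} {x y : Fin n → ℝ} (hm1 : 1 ≤ m)
    (hm : m ≤ s.card) (hx : ∀ i ∈ s, 0 < x i) (hy : ∀ i ∈ s, 0 < y i) :
    (E m s x) ^ ((1:ℝ)/m) + (E m s y) ^ ((1:ℝ)/m) ≤ (E m s (x + y)) ^ ((1:ℝ)/m) := by
  have hxy : ∀ i ∈ s, 0 < (x + y) i := fun i hi => add_pos (hx i hi) (hy i hi)
  have hrange : (Finset.range m).Nonempty := Finset.nonempty_range_iff.2 (by omega)
  have hapos : ∀ j ∈ Finset.range m, 0 < E (j+1) s x / E j s x := by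
    intro j hj
    rw [Finset.mem_range] at hj
    exact div_pos (E_pos (by omega) hx) (E_pos (by omega) hx)
  have hbpos : ∀ j ∈ Finset.range m, 0 < E (j+1) s y / E j s y := by
    intro j hj
    rw [Finset.mem_range] at hj
    exact div_pos (E_pos (by omega) hy) (E_pos (by omega) hy)
  have h1 := gm_superadd (Finset.range m) hrange _ _ hapos hbpos
  rw [Finset.card_range] at h1
  rw [← prod_r hm hx, ← prod_r hm hy, ← prod_r hm hxy]
  refine le_trans h1 ?_
  apply Real.rpow_le_rpow (Finset.prod_nonneg ?_) (Finset.prod_le_prod ?_ ?_) (by positivity)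
  · intro j hj
    exact (add_pos (hapos j hj) (hbpos j hj)).le
  · intro j hj
    exact (add_pos (hapos j hj) (hbpos j hj)).le
  · intro j hj
    rw [Finset.mem_range] at hj
    exact r_superadd j s x y (by omega) hx hy

end MLAux

open MLAux

lemma Hm_eq (n m : ℕ) (k : Fin n → ℝ) :
    Hm n m k = ((Nat.factorial m * Nat.factorial (n - m) : ℕ) : ℝ) / (Nat.factorial n : ℝ) *
      E m Finset.univ k := rfl

lemma Hm_pos {n m : ℕ} (hmn : m ≤ n) {k : Fin n → ℝ} (hk : ∀ i, 0 < k i) :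
    0 < Hm n m k := by
  rw [Hm_eq]
  have h1 : 0 < ((Nat.factorial m * Nat.factorial (n - m) : ℕ) : ℝ) / (Nat.factorial n : ℝ) := by
    apply div_pos
    · exact_mod_cast Nat.mul_pos m.factorial_pos (n - m).factorial_pos
    · exact_mod_cast n.factorial_pos
  refine mul_pos h1 (E_pos ?_ (fun i _ => hk i))
  simp [Finset.card_univ, hmn]

lemma phi_superadd {n m : ℕ} (hm1 : 1 ≤ m) (hmn : m ≤ n) {x y : Fin n → ℝ}
    (hx : ∀ i, 0 < x i) (hy : ∀ i, 0 < y i) :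
    phi n m x + phi n m y ≤ phi n m (x + y) := by
  unfold phi
  rw [Hm_eq, Hm_eq, Hm_eq]
  set c : ℝ := ((Nat.factorial m * Nat.factorial (n - m) : ℕ) : ℝ) / (Nat.factorial n : ℝ)
    with hc
  have hc0 : 0 ≤ c := by positivity
  have hcard : m ≤ (Finset.univ : Finset (Fin n)).card := by
    simp [Finset.card_univ, hmn]
  have hEx : 0 ≤ E m Finset.univ x := (E_pos hcard (fun i _ => hx i)).le
  have hEy : 0 ≤ E m Finset.univ y := (E_pos hcard (fun i _ => hy i)).le
  have hExy : 0 ≤ E m Finset.univ (x + y) :=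
    (E_pos hcard (fun i _ => add_pos (hx i) (hy i))).le
  have key := E_rpow_superadd hm1 hcard (fun i _ => hx i) (fun i _ => hy i)
  rw [Real.mul_rpow hc0 hEx, Real.mul_rpow hc0 hEy, Real.mul_rpow hc0 hExy, ← mul_add]
  exact mul_le_mul_of_nonneg_left key (Real.rpow_nonneg hc0 _)

lemma Hm_smul (n m : ℕ) (t : ℝ) (k : Fin n → ℝ) :
    Hm n m (t • k) = t ^ m * Hm n m k := by
  unfold Hm
  have key : ∑ s ∈ Finset.powersetCard m (Finset.univ : Finset (Fin n)), ∏ i ∈ s, (t • k) i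
      = t ^ m * ∑ s ∈ Finset.powersetCard m (Finset.univ : Finset (Fin n)), ∏ i ∈ s, k i := by
    rw [Finset.mul_sum]
    apply Finset.sum_congr rfl
    intro s hs
    rw [Finset.mem_powersetCard] at hs
    have h1 : ∏ i ∈ s, (t • k) i = ∏ i ∈ s, (t * k i) := rfl
    rw [h1, Finset.prod_mul_distrib, Finset.prod_const, hs.2]
  rw [key]
  ring

lemma phi_smul {n m : ℕ} (hm1 : 1 ≤ m) {t : ℝ} (ht : 0 ≤ t) (k : Fin n → ℝ)
    (hHm : 0 ≤ Hm n m k) : phi n m (t • k) = t * phi n m k := by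
  unfold phi
  rw [Hm_smul, Real.mul_rpow (by positivity) hHm]
  congr 1
  rw [← Real.rpow_natCast t m, ← Real.rpow_mul ht]
  rw [mul_one_div, div_self (by exact_mod_cast Nat.one_le_iff_ne_zero.1 hm1), Real.rpow_one]

/-- Supporting-hyperplane inequality for the concave, degree-one homogeneous
function `φ = H_m^(1/m)`: for all `h, k` in the open positive cone,
`φ(k) ≤ Σ_i ∂φ/∂k_i(h)·k_i`. -/
theorem stmt12 (n m : ℕ) (hn : 2 ≤ n) (hm1 : 1 ≤ m) (hmn : m ≤ n)
    (h k : Fin n → ℝ) (hh : ∀ i, 0 < h i) (hk : ∀ i, 0 < k i) :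
    phi n m k ≤ ∑ i, fderiv ℝ (phi n m) h (Pi.single i 1) * k i := by
  -- differentiability of phi at h
  have hHmdiff : DifferentiableAt ℝ (Hm n m) h := by
    apply DifferentiableAt.const_mul
    apply DifferentiableAt.fun_sum
    intro t ht
    exact (hasFDerivAt_finset_prod (u := t) (x := h)).differentiableAt
  have hHmpos : 0 < Hm n m h := Hm_pos hmn hh
  have hdiff : DifferentiableAt ℝ (phi n m) h :=
    hHmdiff.rpow_const (Or.inl hHmpos.ne')
  set D := fderiv ℝ (phi n m) h with hD
  -- the sum equals D k
  have hsum : ∑ i, D (Pi.single i 1) * k i = D k := by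
    have : k = ∑ i, Pi.single i (k i) := (Finset.univ_sum_single k).symm
    conv_rhs => rw [this]
    rw [map_sum]
    apply Finset.sum_congr rfl
    intro i _
    have h2 : Pi.single i (k i) = k i • (Pi.single i 1 : Fin n → ℝ) := by
      funext j
      by_cases hj : j = i
      · subst hj; simp
      · simp [Pi.single_eq_of_ne hj]
    rw [h2, map_smul, smul_eq_mul, mul_comm]
  rw [hsum]
  -- the one-variable function
  have haff : HasDerivAt (fun t : ℝ => h + t • k) k 0 := by
    simpa using ((hasDerivAt_id (0:ℝ)).smul_const k).const_add h
  have hf' : HasFDerivAt (phi n m) D ((fun t : ℝ => h + t • k) 0) := by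
    simpa using hdiff.hasFDerivAt
  have hcomp : HasDerivAt (phi n m ∘ fun t : ℝ => h + t • k) (D k) 0 :=
    hf'.comp_hasDerivAt 0 haff
  -- slope bound
  have hslope : ∀ t ∈ Set.Ioi (0:ℝ),
      phi n m k ≤ slope (phi n m ∘ fun t : ℝ => h + t • k) 0 t := by
    intro t ht
    rw [Set.mem_Ioi] at ht
    have htk : ∀ i, 0 < (t • k) i := fun i => mul_pos ht (hk i)
    have hsup := phi_superadd hm1 hmn hh htk
    have hsm : phi n m (t • k) = t * phi n m k :=
      phi_smul hm1 ht.le k (Hm_pos hmn hk).le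
    rw [hsm] at hsup
    have hval : (phi n m ∘ fun t : ℝ => h + t • k) t = phi n m (h + t • k) := rfl
    have hval0 : (phi n m ∘ fun t : ℝ => h + t • k) 0 = phi n m h := by
      simp [Function.comp]
    rw [slope_def_field, hval, hval0, sub_zero, le_div_iff₀ ht]
    linarith
  -- pass to the limit
  have hder := (hcomp.hasDerivWithinAt (s := Set.Ioi (0:ℝ)))
  rw [hasDerivWithinAt_iff_tendsto_slope] at hder
  have hdiffset : Set.Ioi (0:ℝ) \ {0} = Set.Ioi 0 := by
    apply Set.diff_singleton_eq_self
    simp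
  rw [hdiffset] at hder
  refine ge_of_tendsto hder ?_
  filter_upwards [self_mem_nhdsWithin] with t ht
  exact hslope t ht
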